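/- Let E be a real Hilbert space, f : E → ℝ convex and continuous, λ > 0, let C_1, …, C_N ⊆ E be nonempty closed convex sets, and let γ_1, …, γ_N ≥ 0 with Σ_{n=1}^N γ_n ≤ 1. Define Φ(x) = λ f(x) + (1/2) Σ_{n=1}^N γ_n (Metric.infDist x C_n)². If x ∈ E and x⁺ minimizes z ↦ λ f(z) + (1/2)‖z − (x − Σ_{n=1}^N γ_n (x − P_{C_n} x))‖² over E, then Φ(x⁺) ≤ Φ(x) (each FiRe-HQS step does not increase the objective). -/

import Mathlib

/-- Each FiRe-HQS step does not increase the objective: in a real Hilbert space, for `f`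
convex continuous, `λ > 0`, nonempty closed convex sets `C_1, …, C_N` with metric
projections `P n`, weights `γ_n ≥ 0` with `Σ γ_n ≤ 1`, and objective
`Φ(x) = λ f(x) + (1/2) Σ_n γ_n (infDist x (C n))²`, if `x⁺` is the FiRe-HQS update
`prox_{λf}(x − Σ_n γ_n (x − P_n x))` of `x`, then `Φ(x⁺) ≤ Φ(x)`. -/
theorem fire_hqs_step_descent
    {E : Type*} [NormedAddCommGroup E] [InnerProductSpace ℝ E] [CompleteSpace E]
    (f : E → ℝ) (hf : ConvexOn ℝ Set.univ f) (hfc : Continuous f)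
    (lam : ℝ) (hlam : 0 < lam)
    (N : ℕ) (C : Fin N → Set E)
    (hne : ∀ n, (C n).Nonempty) (hcl : ∀ n, IsClosed (C n)) (hconv : ∀ n, Convex ℝ (C n))
    (gamma : Fin N → ℝ) (hγ0 : ∀ n, 0 ≤ gamma n) (hγs : ∑ n, gamma n ≤ 1)
    (P : Fin N → E → E) (hPC : ∀ n x, P n x ∈ C n)
    (hP : ∀ n x, ‖x - P n x‖ = Metric.infDist x (C n))
    (Φ : E → ℝ)
    (hΦ : ∀ x : E,
      Φ x = lam * f x + (1 / 2 : ℝ) * ∑ n, gamma n * (Metric.infDist x (C n)) ^ 2)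
    (x xplus : E)
    (hxplus : ∀ w : E,
      lam * f xplus +
          (1 / 2 : ℝ) * ‖xplus - (x - ∑ n, gamma n • (x - P n x))‖ ^ 2 ≤
        lam * f w + (1 / 2 : ℝ) * ‖w - (x - ∑ n, gamma n • (x - P n x))‖ ^ 2) :
    Φ xplus ≤ Φ x := by
  classical
  set u : E := ∑ n, gamma n • (x - P n x) with hu
  set y : E := x - u with hy
  -- key identity for any z
  have key : ∀ z : E, ∑ n, gamma n * ‖z - P n x‖ ^ 2
      = ‖z - y‖ ^ 2 + ((∑ n, gamma n) - 1) * ‖z - x‖ ^ 2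
        + ((∑ n, gamma n * ‖x - P n x‖ ^ 2) - ‖u‖ ^ 2) := by
    intro z
    have h1 : ∀ n, ‖z - P n x‖ ^ 2
        = ‖z - x‖ ^ 2 + 2 * inner ℝ (z - x) (x - P n x) + ‖x - P n x‖ ^ 2 := by
      intro n
      have hz : z - P n x = (z - x) + (x - P n x) := by abel
      rw [hz, @norm_add_sq_real]
    have h2 : ‖z - y‖ ^ 2 = ‖z - x‖ ^ 2 + 2 * inner ℝ (z - x) u + ‖u‖ ^ 2 := by
      have hz : z - y = (z - x) + u := by rw [hy]; abel
      rw [hz, @norm_add_sq_real]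
    have h3 : (inner ℝ (z - x) u : ℝ) = ∑ n, gamma n * inner ℝ (z - x) (x - P n x) := by
      rw [hu, inner_sum]
      simp [real_inner_smul_right]
    have expand : ∑ n, gamma n * ‖z - P n x‖ ^ 2
        = (∑ n, gamma n) * ‖z - x‖ ^ 2
          + 2 * (∑ n, gamma n * inner ℝ (z - x) (x - P n x))
          + ∑ n, gamma n * ‖x - P n x‖ ^ 2 := by
      simp only [h1, mul_add]
      rw [Finset.sum_add_distrib, Finset.sum_add_distrib, ← Finset.sum_mul,
        Finset.mul_sum]
      congr 1
      congr 1
      apply Finset.sum_congr rfl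
      intros; ring
    rw [expand, h2, ← h3]
    ring
  -- step 1: Φ xplus ≤ surrogate
  have step1 : Φ xplus ≤ lam * f xplus + (1 / 2 : ℝ) * ∑ n, gamma n * ‖xplus - P n x‖ ^ 2 := by
    rw [hΦ]
    have hsum : ∑ n, gamma n * (Metric.infDist xplus (C n)) ^ 2
        ≤ ∑ n, gamma n * ‖xplus - P n x‖ ^ 2 := by
      apply Finset.sum_le_sum
      intro n _
      have hle : Metric.infDist xplus (C n) ≤ ‖xplus - P n x‖ := by
        rw [← dist_eq_norm]
        exact Metric.infDist_le_dist_of_mem (hPC n x)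
      have h0 : 0 ≤ Metric.infDist xplus (C n) := Metric.infDist_nonneg
      have := mul_le_mul hle hle h0 (le_trans h0 hle)
      nlinarith [hγ0 n]
    nlinarith
  -- step 2: surrogate at xplus vs prox objective
  have hx2 : ((∑ n, gamma n) - 1) * ‖xplus - x‖ ^ 2 ≤ 0 := by
    have : (0:ℝ) ≤ ‖xplus - x‖ ^ 2 := sq_nonneg _
    nlinarith
  have step3 := hxplus x
  have hxy : x - y = u := by rw [hy]; abel
  have keyp := key xplus
  -- rewrite Φ x
  have hΦx : Φ x = lam * f x + (1 / 2 : ℝ) * ∑ n, gamma n * ‖x - P n x‖ ^ 2 := by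
    rw [hΦ]
    congr 1
    congr 1
    apply Finset.sum_congr rfl
    intro n _
    rw [hP n x]
  rw [hΦx]
  rw [hxy] at step3
  nlinarith [sq_nonneg ‖u‖, sq_nonneg ‖xplus - y‖]
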